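/- Let F be a field of characteristic p with p > n/2. Let y be an n×n matrix over F whose characteristic polynomial is totally inseparable (i.e. has a single root over the algebraic closure) and which is not regular. Then y = z + N for some scalar matrix z over F and some nilpotent matrix N over F. Equivalently: if the characteristic polynomial of y is (x - λ)^n for λ in the algebraic closure, and y is not regular, then λ ∈ F. -/

import Mathlib

open Polynomial

/-- Let `F` be a field of characteristic `p` with `p > n/2`. If `y` is an
`n×n` matrix over `F` whose characteristic polynomial over the algebraic closure is
`(x - λ)^n` (i.e. totally inseparable), and `y` is not regular (its minimal polynomial
differs from its characteristic polynomial), then `λ ∈ F`; equivalently, `y` is the sum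
of a scalar matrix over `F` and a nilpotent matrix over `F`. -/
theorem inseparable_nonregular_scalar (F : Type*) [Field F] (p n : ℕ) [CharP F p]
    (hp : p.Prime) (hn : 0 < n) (hpn : n < 2 * p)
    (y : Matrix (Fin n) (Fin n) F) (lam : AlgebraicClosure F)
    (hchar : (y.map (algebraMap F (AlgebraicClosure F))).charpoly
      = (Polynomial.X - Polynomial.C lam) ^ n)
    (hreg : minpoly F y ≠ y.charpoly) :
    lam ∈ (algebraMap F (AlgebraicClosure F)).range ∧
    ∃ (c : F) (N : Matrix (Fin n) (Fin n) F), IsNilpotent N ∧ y = c • 1 + N := by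
  set f : F →+* AlgebraicClosure F := algebraMap F (AlgebraicClosure F) with hf
  have hfinj : Function.Injective f := f.injective
  have hne : NeZero n := ⟨hn.ne'⟩
  have hint : IsIntegral F y := Matrix.isIntegral y
  -- minpoly divides charpoly
  have hdvd : minpoly F y ∣ y.charpoly := Matrix.minpoly_dvd_charpoly y
  have hmapchar : (y.charpoly).map f = (X - C lam) ^ n := by
    rw [← Matrix.charpoly_map y f, hchar]
  have hdvdK : (minpoly F y).map f ∣ (X - C lam) ^ n := by
    rw [← hmapchar]; exact Polynomial.map_dvd f hdvd
  obtain ⟨k, hkn, hassoc⟩ := (dvd_prime_pow (Polynomial.prime_X_sub_C lam) n).mp hdvdK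
  have hmonic : ((minpoly F y).map f).Monic := (minpoly.monic hint).map f
  have heqk : (minpoly F y).map f = (X - C lam) ^ k :=
    Polynomial.eq_of_monic_of_associated hmonic ((monic_X_sub_C lam).pow k) hassoc
  -- k < n
  have hklt : k < n := by
    rcases lt_or_eq_of_le hkn with h | h
    · exact h
    · exfalso
      apply hreg
      apply Polynomial.map_injective f hfinj
      rw [heqk, hmapchar, h]
  -- k ≥ 1
  have hk1 : 1 ≤ k := by
    have h0 : 0 < (minpoly F y).natDegree := minpoly.natDegree_pos hint
    have : ((minpoly F y).map f).natDegree = k := by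
      rw [heqk]
      simp [Polynomial.natDegree_pow, Polynomial.natDegree_X_sub_C]
    rw [Polynomial.natDegree_map] at this
    omega
  -- extract coefficient facts : (k:K)*lam and (n:K)*lam in range of f
  have coeff_pow : ∀ m : ℕ, 1 ≤ m → (((X - C lam) ^ m).coeff (m - 1)) = -((m : AlgebraicClosure F) * lam) := by
    intro m hm
    have h2 : (X - C lam : Polynomial (AlgebraicClosure F)) = X + C (-lam) := by
      rw [map_neg, sub_eq_add_neg]
    rw [h2, Polynomial.coeff_X_add_C_pow]
    have h1 : m - (m - 1) = 1 := by omega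
    have h3 : m.choose (m - 1) = m := by
      rw [Nat.choose_symm hm, Nat.choose_one_right]
    rw [h1, h3]
    push_cast
    ring
  have hkF : ∃ b : F, f b = (k : AlgebraicClosure F) * lam := by
    refine ⟨-((minpoly F y).coeff (k - 1)), ?_⟩
    have := congrArg (fun q => Polynomial.coeff q (k - 1)) heqk
    simp only [Polynomial.coeff_map] at this
    rw [coeff_pow k hk1] at this
    rw [map_neg, this]; ring
  have hnF : ∃ b : F, f b = (n : AlgebraicClosure F) * lam := by
    refine ⟨-((y.charpoly).coeff (n - 1)), ?_⟩
    have := congrArg (fun q => Polynomial.coeff q (n - 1)) hmapchar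
    simp only [Polynomial.coeff_map] at this
    rw [coeff_pow n hn] at this
    rw [map_neg, this]; ring
  -- choose m with p ∤ m, 0 < m, and (m:K)*lam ∈ range f
  obtain ⟨m, hm0, hmp, b, hb⟩ : ∃ m : ℕ, 0 < m ∧ ¬ p ∣ m ∧ ∃ b : F, f b = (m : AlgebraicClosure F) * lam := by
    by_cases hpk : p ∣ k
    · -- then k ≥ p, so n - k < p and n - k > 0
      have hkp : p ≤ k := Nat.le_of_dvd hk1 hpk
      refine ⟨n - k, by omega, ?_, ?_⟩
      · intro hd
        have := Nat.le_of_dvd (by omega) hd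
        omega
      · obtain ⟨b1, hb1⟩ := hnF
        obtain ⟨b2, hb2⟩ := hkF
        refine ⟨b1 - b2, ?_⟩
        rw [map_sub, hb1, hb2, Nat.cast_sub hkn]
        ring
    · obtain ⟨b, hb⟩ := hkF
      exact ⟨k, hk1, hpk, b, hb⟩
  have hmF : (m : F) ≠ 0 := by
    rw [Ne, CharP.cast_eq_zero_iff F p m]
    exact hmp
  set c : F := b / (m : F) with hc
  have hfc : f c = lam := by
    have hmK : f (m : F) = (m : AlgebraicClosure F) := map_natCast f m
    have hmK0 : (m : AlgebraicClosure F) ≠ 0 := by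
      rw [← hmK]
      exact fun h => hmF (hfinj (by simpa using h))
    rw [hc, map_div₀, hmK]
    rw [hb]; exact mul_div_cancel_left₀ lam hmK0
  refine ⟨⟨c, hfc⟩, c, y - c • 1, ?_, by abel⟩
  -- nilpotency: charpoly y = (X - C c)^n
  have hcharF : y.charpoly = (X - C c) ^ n := by
    apply Polynomial.map_injective f hfinj
    rw [hmapchar, Polynomial.map_pow, Polynomial.map_sub, Polynomial.map_X, Polynomial.map_C, hfc]
  refine ⟨n, ?_⟩
  have := Matrix.aeval_self_charpoly y
  rw [hcharF] at this
  have haev : Polynomial.aeval y ((X - C c) ^ n) = (y - c • 1) ^ n := by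
    rw [map_pow]
    congr 1
    rw [map_sub, Polynomial.aeval_X, Polynomial.aeval_C, Algebra.algebraMap_eq_smul_one]
  rw [haev] at this
  exact this
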